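/- Let r ≥ 2, 0 < ρ < 1, and suppose n < ρ·(k-1)·log d / (d·log r). If T is uniformly distributed on the set of labeled forests with d nodes and k edges, then for any estimator T̂ mapping n samples from ({1,...,r}^d)^n to forests with k edges, the error probability P(T̂ ≠ T) > 1 - exp((ρ-1)(k-1)·log d), which tends to 1 as (k,d) → ∞. -/

import Mathlib

open Finset

section AuxiliaryDecode

open SimpleGraph

variable {V : Type*} [LinearOrder V]

/-- Adding an edge at a vertex `v` not used by any edge of `S` preserves acyclicity. -/
lemma pendant_acyclic (S : Set (Sym2 V)) (hS : (fromEdgeSet S).IsAcyclic)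
    (v u : V) (hv : ∀ e ∈ S, v ∉ e) :
    (fromEdgeSet (insert s(v,u) S)).IsAcyclic := by
  intro x c hc
  have hmem : ∀ e ∈ (fromEdgeSet (insert s(v,u) S)).edgeSet, v ∈ e → e = s(v,u) := by
    intro e he hve
    rw [edgeSet_fromEdgeSet] at he
    rcases he.1 with h | h
    · exact h
    · exact absurd hve (hv e h)
  by_cases hvs : v ∈ c.support
  · have hc' := hc.rotate hvs
    cases hcc : c.rotate v hvs with
    | nil => rw [hcc] at hc'; exact Walk.IsCycle.not_of_nil hc'
    | @cons _ w _ h p =>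
      rw [hcc, Walk.cons_isCycle_iff] at hc'
      -- h : Adj v w ; p : Walk w v
      have he1 : s(v, w) = s(v, u) :=
        hmem _ ((fromEdgeSet (insert s(v,u) S)).mem_edgeSet.mpr h) (Sym2.mem_mk_left v w)
      have hwv : w ≠ v := fun hh => h.ne hh.symm
      obtain ⟨y, h2, q, hq⟩ := p.reverse.exists_eq_cons_of_ne hwv.symm
      have he2 : s(v, y) = s(v, u) :=
        hmem _ ((fromEdgeSet (insert s(v,u) S)).mem_edgeSet.mpr h2) (Sym2.mem_mk_left v y)
      have : s(v, y) ∈ p.edges := by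
        have : s(v, y) ∈ p.reverse.edges := by rw [hq]; exact List.mem_cons_self
        rwa [Walk.edges_reverse, List.mem_reverse] at this
      exact hc'.2 (by rw [show s(v,w) = s(v,y) from he1.trans he2.symm]; exact this)
  · have hedges : ∀ e ∈ c.edges, e ∈ (fromEdgeSet S).edgeSet := by
      intro e he
      have he' := c.edges_subset_edgeSet he
      rw [edgeSet_fromEdgeSet] at he' ⊢
      rcases he'.1 with h | h
      · exfalso
        subst h
        exact hvs (c.fst_mem_support_of_mem_edges he)
      · exact ⟨h, he'.2⟩
    exact hS (c.transfer _ hedges) (hc.transfer _)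


/-- minimum of `S`, with default -/
def pick (v₀ : V) (S : Finset V) : V := if h : S.Nonempty then S.min' h else v₀

lemma pick_mem {v₀ : V} {S : Finset V} (hS : S.Nonempty) : pick v₀ S ∈ S := by
  rw [pick, dif_pos hS]; exact S.min'_mem hS

lemma pick_le {v₀ : V} {S : Finset V} (hS : S.Nonempty) {x : V} (hx : x ∈ S) :
    pick v₀ S ≤ x := by
  rw [pick, dif_pos hS]; exact S.min'_le x hx

/-- Prüfer-style decoding of a list into an edge set of a forest. -/
def decode (v₀ : V) : Finset V → List V → Finset (Sym2 V)
  | U, [] => {s(pick v₀ U, pick v₀ (U.erase (pick v₀ U)))}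
  | U, a :: L => insert s(pick v₀ (U \ (a :: L).toFinset), a)
      (decode v₀ (U.erase (pick v₀ (U \ (a :: L).toFinset))) L)

lemma sdiff_list_nonempty {U : Finset V} {L : List V} (h : L.length + 1 ≤ U.card) :
    (U \ L.toFinset).Nonempty := by
  rw [← Finset.card_pos]
  have h1 := Finset.le_card_sdiff L.toFinset U
  have h2 := L.toFinset_card_le
  omega

lemma decode_support {v₀ : V} : ∀ {U : Finset V} (L : List V),
    L.length + 2 ≤ U.card → ∀ e ∈ decode v₀ U L, ∀ x ∈ e, x ∈ U ∨ x ∈ L := by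
  intro U L
  induction L generalizing U with
  | nil =>
    intro hcard e he x hx
    rw [decode, Finset.mem_singleton] at he
    subst he
    have hU : U.Nonempty := by rw [← Finset.card_pos]; omega
    have h1 : pick v₀ U ∈ U := pick_mem hU
    have hU2 : (U.erase (pick v₀ U)).Nonempty := by
      rw [← Finset.card_pos, Finset.card_erase_of_mem h1]; omega
    have h2 : pick v₀ (U.erase (pick v₀ U)) ∈ U :=
      Finset.mem_of_mem_erase (pick_mem hU2)
    rw [Sym2.mem_iff] at hx
    rcases hx with rfl | rfl
    · exact Or.inl h1
    · exact Or.inl h2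
  | cons a L ih =>
    intro hcard e he x hx
    rw [decode, Finset.mem_insert] at he
    have hne : (U \ (a :: L).toFinset).Nonempty :=
      sdiff_list_nonempty (by simp only [List.length_cons] at hcard ⊢; omega)
    set v := pick v₀ (U \ (a :: L).toFinset) with hv
    have hvU : v ∈ U := (Finset.mem_sdiff.mp (pick_mem (v₀:=v₀) hne)).1
    rcases he with rfl | he
    · rw [Sym2.mem_iff] at hx
      rcases hx with rfl | rfl
      · exact Or.inl hvU
      · exact Or.inr List.mem_cons_self
    · have hcard' : L.length + 2 ≤ (U.erase v).card := by
        rw [Finset.card_erase_of_mem hvU]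
        simp only [List.length_cons] at hcard; omega
      rcases ih hcard' e he x hx with h | h
      · exact Or.inl (Finset.mem_of_mem_erase h)
      · exact Or.inr (List.mem_cons_of_mem a h)

/-- number of edges of `E` containing `x` -/
def edeg (E : Finset (Sym2 V)) (x : V) : ℕ := (E.filter (fun e => x ∈ e)).card

lemma decode_nodiag {v₀ : V} : ∀ {U : Finset V} (L : List V),
    L.length + 2 ≤ U.card → ∀ e ∈ decode v₀ U L, ¬ e.IsDiag := by
  intro U L
  induction L generalizing U with
  | nil =>
    intro hcard e he
    rw [decode, Finset.mem_singleton] at he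
    subst he
    have hU : U.Nonempty := by rw [← Finset.card_pos]; omega
    have h1 : pick v₀ U ∈ U := pick_mem hU
    have hU2 : (U.erase (pick v₀ U)).Nonempty := by
      rw [← Finset.card_pos, Finset.card_erase_of_mem h1]; omega
    have h2 := Finset.ne_of_mem_erase (pick_mem (v₀:=v₀) hU2)
    rw [Sym2.isDiag_iff_proj_eq]
    exact fun hh => h2 hh.symm
  | cons a L ih =>
    intro hcard e he
    rw [decode, Finset.mem_insert] at he
    have hne : (U \ (a :: L).toFinset).Nonempty :=
      sdiff_list_nonempty (by simp only [List.length_cons] at hcard ⊢; omega)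
    set v := pick v₀ (U \ (a :: L).toFinset) with hv
    have hvmem := Finset.mem_sdiff.mp (pick_mem (v₀:=v₀) hne)
    rcases he with rfl | he
    · rw [Sym2.isDiag_iff_proj_eq]
      intro hh
      exact hvmem.2 (List.mem_toFinset.mpr (by rw [show pick v₀ (U \ (a :: L).toFinset) = a from hh]; exact List.mem_cons_self))
    · have hcard' : L.length + 2 ≤ (U.erase v).card := by
        rw [Finset.card_erase_of_mem hvmem.1]
        simp only [List.length_cons] at hcard; omega
      exact ih hcard' e he

lemma decode_head_not_in_rest {v₀ : V} {U : Finset V} {a : V} {L : List V}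
    (hcard : (a :: L).length + 2 ≤ U.card) :
    ∀ e ∈ decode v₀ (U.erase (pick v₀ (U \ (a :: L).toFinset))) L,
      pick v₀ (U \ (a :: L).toFinset) ∉ e := by
  intro e he hme
  have hne : (U \ (a :: L).toFinset).Nonempty :=
    sdiff_list_nonempty (by simp only [List.length_cons] at hcard ⊢; omega)
  set v := pick v₀ (U \ (a :: L).toFinset) with hv
  have hvmem := Finset.mem_sdiff.mp (pick_mem (v₀:=v₀) hne)
  have hcard' : L.length + 2 ≤ (U.erase v).card := by
    rw [Finset.card_erase_of_mem hvmem.1]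
    simp only [List.length_cons] at hcard; omega
  rcases decode_support L hcard' e he v hme with h | h
  · exact (Finset.notMem_erase v U) h
  · exact hvmem.2 (List.mem_toFinset.mpr (List.mem_cons_of_mem a h))

lemma decode_card {v₀ : V} : ∀ {U : Finset V} (L : List V),
    L.length + 2 ≤ U.card → (decode v₀ U L).card = L.length + 1 := by
  intro U L
  induction L generalizing U with
  | nil => intro _; rw [decode]; simp
  | cons a L ih =>
    intro hcard
    rw [decode]
    have hne : (U \ (a :: L).toFinset).Nonempty :=
      sdiff_list_nonempty (by simp only [List.length_cons] at hcard ⊢; omega)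
    set v := pick v₀ (U \ (a :: L).toFinset) with hv
    have hvmem := Finset.mem_sdiff.mp (pick_mem (v₀:=v₀) hne)
    have hcard' : L.length + 2 ≤ (U.erase v).card := by
      rw [Finset.card_erase_of_mem hvmem.1]
      simp only [List.length_cons] at hcard; omega
    have hnotin : s(v, a) ∉ decode v₀ (U.erase v) L := fun hmem =>
      decode_head_not_in_rest hcard _ hmem (Sym2.mem_mk_left v a)
    rw [Finset.card_insert_of_notMem hnotin, ih hcard']
    simp

lemma edeg_key {v₀ : V} : ∀ (L : List V) {U : Finset V},
    L.length + 2 ≤ U.card → ∀ u ∈ U,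
    ((U \ L.toFinset).filter (· < u)).card ≤ 1 →
    L.count u + 1 ≤ edeg (decode v₀ U L) u := by
  intro L
  induction L with
  | nil =>
    intro U hcard u hu hfilt
    rw [List.count_nil]
    have hU : U.Nonempty := by rw [← Finset.card_pos]; omega
    set w1 := pick v₀ U with hw1
    have h1 : w1 ∈ U := pick_mem hU
    have hU2 : (U.erase w1).Nonempty := by
      rw [← Finset.card_pos, Finset.card_erase_of_mem h1]; omega
    set w2 := pick v₀ (U.erase w1) with hw2
    have h2 : w2 ∈ U.erase w1 := pick_mem hU2
    have hmem : u ∈ s(w1, w2) := by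
      by_contra hnot
      rw [Sym2.mem_iff, not_or] at hnot
      have hw1u : w1 < u := lt_of_le_of_ne (pick_le hU hu) (Ne.symm (by simpa using hnot.1))
      have huw : u ∈ U.erase w1 := Finset.mem_erase.mpr ⟨fun hh => hnot.1 (by rw [hh]), hu⟩
      have hw2u : w2 < u := lt_of_le_of_ne (pick_le hU2 huw) (Ne.symm (by simpa using hnot.2))
      have hsub : ({w1, w2} : Finset V) ⊆ (U \ ([] : List V).toFinset).filter (· < u) := by
        intro x hx
        rw [Finset.mem_insert, Finset.mem_singleton] at hx
        rw [Finset.mem_filter, List.toFinset_nil, Finset.sdiff_empty]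
        rcases hx with rfl | rfl
        · exact ⟨h1, hw1u⟩
        · exact ⟨Finset.mem_of_mem_erase h2, hw2u⟩
      have hcard2 : ({w1, w2} : Finset V).card = 2 := by
        rw [Finset.card_insert_of_notMem (by
          simp only [Finset.mem_singleton]
          exact fun hh => (Finset.ne_of_mem_erase h2) hh.symm), Finset.card_singleton]
      have := Finset.card_le_card hsub
      omega
    rw [decode, edeg]
    rw [Finset.filter_singleton, if_pos hmem]
    simp
  | cons a L ih =>
    intro U hcard u hu hfilt
    have hne : (U \ (a :: L).toFinset).Nonempty :=
      sdiff_list_nonempty (by simp only [List.length_cons] at hcard ⊢; omega)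
    set v := pick v₀ (U \ (a :: L).toFinset) with hv
    have hvmem := Finset.mem_sdiff.mp (pick_mem (v₀:=v₀) hne)
    have hcard' : L.length + 2 ≤ (U.erase v).card := by
      rw [Finset.card_erase_of_mem hvmem.1]
      simp only [List.length_cons] at hcard; omega
    have hnotin : s(v, a) ∉ decode v₀ (U.erase v) L := fun hmem =>
      decode_head_not_in_rest hcard _ hmem (Sym2.mem_mk_left v a)
    by_cases huv : u = v
    · -- u = v : count is 0, degree at least 1
      have hcnt : (a :: L).count u = 0 := by
        rw [List.count_eq_zero]
        intro hmem
        exact hvmem.2 (List.mem_toFinset.mpr (by rw [← hv, ← huv]; exact hmem))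
      rw [hcnt, decode, edeg]
      have hmm : s(v, a) ∈ (insert s(v, a) (decode v₀ (U.erase v) L)).filter (fun e => u ∈ e) :=
        Finset.mem_filter.mpr ⟨Finset.mem_insert_self _ _,
          by rw [huv]; exact Sym2.mem_mk_left v a⟩
      exact Finset.card_pos.mpr ⟨_, hmm⟩
    · -- u ≠ v : use induction hypothesis
      have huU' : u ∈ U.erase v := Finset.mem_erase.mpr ⟨huv, hu⟩
      -- the filter condition for the smaller set
      have hsub : ((U.erase v \ L.toFinset).filter (· < u)) ⊆
          insert a (((U \ (a :: L).toFinset).filter (· < u)).erase v) := by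
        intro x hx
        rw [Finset.mem_filter, Finset.mem_sdiff, Finset.mem_erase] at hx
        obtain ⟨⟨⟨hxv, hxU⟩, hxL⟩, hxu⟩ := hx
        rcases eq_or_ne x a with rfl | hxa
        · exact Finset.mem_insert_self _ _
        · refine Finset.mem_insert_of_mem (Finset.mem_erase.mpr ⟨hxv, ?_⟩)
          rw [Finset.mem_filter, Finset.mem_sdiff]
          refine ⟨⟨hxU, fun hmem => ?_⟩, hxu⟩
          rw [List.toFinset_cons, Finset.mem_insert] at hmem
          rcases hmem with h | h
          · exact hxa h
          · exact hxL h
      have hfilt' : ((U.erase v \ L.toFinset).filter (· < u)).card ≤ 1 := by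
        have hle := Finset.card_le_card hsub
        have hins := Finset.card_insert_le a (((U \ (a :: L).toFinset).filter (· < u)).erase v)
        rcases lt_or_ge v u with hvu | huv'
        · -- v < u : v is in the filtered set, erasing it empties it
          have hvin : v ∈ (U \ (a :: L).toFinset).filter (· < u) :=
            Finset.mem_filter.mpr ⟨pick_mem (v₀:=v₀) hne, hvu⟩
          have := Finset.card_erase_of_mem hvin
          omega
        · -- u ≤ v : the filtered set is empty
          have hempty : (U \ (a :: L).toFinset).filter (· < u) = ∅ := by
            rw [Finset.filter_eq_empty_iff]
            intro x hx
            have := pick_le (v₀:=v₀) hne hx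
            rw [← hv] at this
            simp only [not_lt]
            exact le_trans huv' this
          rw [hempty] at hle
          simp only [Finset.erase_empty, Finset.card_insert_of_notMem (Finset.notMem_empty a),
            Finset.card_empty] at hle
          omega
      have hih := ih hcard' u huU' hfilt'
      rw [edeg] at hih
      rw [decode, edeg, Finset.filter_insert, ← hv]
      have hmem_iff : (u ∈ s(v, a)) ↔ u = a := by
        rw [Sym2.mem_iff]
        simp only [huv, false_or]
      by_cases hua : u = a
      · subst hua
        rw [if_pos (hmem_iff.mpr rfl)]
        rw [Finset.card_insert_of_notMem (fun hh => hnotin (Finset.mem_filter.mp hh).1)]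
        rw [List.count_cons_self]
        omega
      · rw [if_neg (fun hh => hua (hmem_iff.mp hh))]
        rw [List.count_cons_of_ne (Ne.symm hua)]
        omega

lemma decode_pick_edeg_le {v₀ : V} {U : Finset V} {a : V} {L : List V}
    (hcard : (a :: L).length + 2 ≤ U.card) :
    edeg (decode v₀ U (a :: L)) (pick v₀ (U \ (a :: L).toFinset)) ≤ 1 := by
  set v := pick v₀ (U \ (a :: L).toFinset) with hv
  rw [edeg]
  have hsub : (decode v₀ U (a :: L)).filter (fun e => v ∈ e) ⊆ {s(v, a)} := by
    intro e he
    rw [Finset.mem_filter] at he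
    rw [decode, ← hv, Finset.mem_insert] at he
    rcases he.1 with rfl | hmem
    · exact Finset.mem_singleton_self _
    · exact absurd he.2 (decode_head_not_in_rest hcard e hmem)
  calc ((decode v₀ U (a :: L)).filter (fun e => v ∈ e)).card
      ≤ ({s(v, a)} : Finset (Sym2 V)).card := Finset.card_le_card hsub
    _ = 1 := Finset.card_singleton _

lemma decode_lt_pick_edeg {v₀ : V} {U : Finset V} {a : V} {L : List V}
    (hcard : (a :: L).length + 2 ≤ U.card) :
    ∀ u ∈ U, u < pick v₀ (U \ (a :: L).toFinset) →
    2 ≤ edeg (decode v₀ U (a :: L)) u := by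
  intro u hu hult
  have hne : (U \ (a :: L).toFinset).Nonempty :=
    sdiff_list_nonempty (by simp only [List.length_cons] at hcard ⊢; omega)
  set v := pick v₀ (U \ (a :: L).toFinset) with hv
  have hcnt : 1 ≤ (a :: L).count u := by
    rw [Nat.one_le_iff_ne_zero, Ne, List.count_eq_zero]
    intro hnot
    have : u ∈ U \ (a :: L).toFinset :=
      Finset.mem_sdiff.mpr ⟨hu, fun hh => hnot (List.mem_toFinset.mp hh)⟩
    exact absurd (pick_le (v₀:=v₀) hne this) (not_le.mpr hult)
  have hfilt : ((U \ (a :: L).toFinset).filter (· < u)).card ≤ 1 := by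
    have : (U \ (a :: L).toFinset).filter (· < u) = ∅ := by
      rw [Finset.filter_eq_empty_iff]
      intro x hx
      have := pick_le (v₀:=v₀) hne hx
      rw [← hv] at this
      simp only [not_lt]
      exact le_trans (le_of_lt hult) this
    rw [this]; simp
  have := edeg_key (v₀:=v₀) (a :: L) hcard u hu hfilt
  omega

lemma decode_inj {v₀ : V} : ∀ (L1 L2 : List V) {U : Finset V},
    L1.length = L2.length → L1.length + 2 ≤ U.card →
    decode v₀ U L1 = decode v₀ U L2 → L1 = L2 := by
  intro L1
  induction L1 with
  | nil =>
    intro L2 U hlen _ _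
    exact (List.length_eq_zero_iff.mp hlen.symm).symm
  | cons a A ih =>
    intro L2 U hlen hcard heq
    cases L2 with
    | nil => simp at hlen
    | cons b B =>
      have hlenAB : A.length = B.length := by simpa using hlen
      have hcardB : (b :: B).length + 2 ≤ U.card := by
        simp only [List.length_cons] at hcard ⊢; omega
      have hneA : (U \ (a :: A).toFinset).Nonempty :=
        sdiff_list_nonempty (by simp only [List.length_cons] at hcard ⊢; omega)
      have hneB : (U \ (b :: B).toFinset).Nonempty :=
        sdiff_list_nonempty (by simp only [List.length_cons] at hcardB ⊢; omega)
      set va := pick v₀ (U \ (a :: A).toFinset) with hva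
      set vb := pick v₀ (U \ (b :: B).toFinset) with hvb
      have hvaU : va ∈ U := (Finset.mem_sdiff.mp (pick_mem (v₀:=v₀) hneA)).1
      have hvbU : vb ∈ U := (Finset.mem_sdiff.mp (pick_mem (v₀:=v₀) hneB)).1
      -- the two picks agree
      have hvab : va = vb := by
        by_contra hne
      -- wlog does not help directly; argue by trichotomy
        rcases lt_or_gt_of_ne hne with hlt | hgt
        · have h2 := decode_lt_pick_edeg (v₀:=v₀) hcardB va hvaU (by rw [← heq] at *; exact hlt)
          rw [← heq] at h2
          have h1 := decode_pick_edeg_le (v₀:=v₀) (U:=U) (a:=a) (L:=A) hcard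
          rw [← hva] at h1
          omega
        · have h2 := decode_lt_pick_edeg (v₀:=v₀) hcard vb hvbU hgt
          rw [heq] at h2
          have h1 := decode_pick_edeg_le (v₀:=v₀) (U:=U) (a:=b) (L:=B) hcardB
          rw [← hvb] at h1
          omega
      -- the heads agree
      have hedgea : s(va, a) ∈ decode v₀ U (a :: A) := by
        rw [decode, ← hva]; exact Finset.mem_insert_self _ _
      have hedgeb : s(va, b) ∈ decode v₀ U (a :: A) := by
        rw [heq, decode, ← hvb, hvab]; exact Finset.mem_insert_self _ _
      have hdegle := decode_pick_edeg_le (v₀:=v₀) (U:=U) (a:=a) (L:=A) hcard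
      rw [← hva, edeg] at hdegle
      have hab : a = b := by
        have h1 : s(va, a) ∈ (decode v₀ U (a :: A)).filter (fun e => va ∈ e) :=
          Finset.mem_filter.mpr ⟨hedgea, Sym2.mem_mk_left _ _⟩
        have h2 : s(va, b) ∈ (decode v₀ U (a :: A)).filter (fun e => va ∈ e) :=
          Finset.mem_filter.mpr ⟨hedgeb, Sym2.mem_mk_left _ _⟩
        have := Finset.card_le_one.mp hdegle _ h1 _ h2
        exact Sym2.congr_right.mp this
      subst hab
      -- tails produce equal decodes
      have hrest : decode v₀ (U.erase va) A = decode v₀ (U.erase va) B := by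
        have hA : decode v₀ U (a :: A) = insert s(va, a) (decode v₀ (U.erase va) A) := by
          rw [decode, ← hva]
        have hB : decode v₀ U (a :: B) = insert s(va, a) (decode v₀ (U.erase va) B) := by
          rw [decode, ← hvb, ← hvab]
        have hnotA : s(va, a) ∉ decode v₀ (U.erase va) A := fun hmem =>
          decode_head_not_in_rest (v₀:=v₀) hcard _ (by rw [← hva] at *; exact hmem)
            (Sym2.mem_mk_left _ _)
        have hnotB : s(va, a) ∉ decode v₀ (U.erase va) B := fun hmem =>
          decode_head_not_in_rest (v₀:=v₀) hcardB _
            (by rw [← hvb, ← hvab] at *; exact hmem) (Sym2.mem_mk_left _ _)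
        ext e
        constructor
        · intro he
          have : e ∈ decode v₀ U (a :: B) := by
            rw [← heq, hA]
            exact Finset.mem_insert_of_mem he
          rw [hB, Finset.mem_insert] at this
          rcases this with rfl | h
          · exact absurd he hnotA
          · exact h
        · intro he
          have : e ∈ decode v₀ U (a :: A) := by
            rw [heq, hB]
            exact Finset.mem_insert_of_mem he
          rw [hA, Finset.mem_insert] at this
          rcases this with rfl | h
          · exact absurd he hnotB
          · exact h
      have hcard' : A.length + 2 ≤ (U.erase va).card := by
        rw [Finset.card_erase_of_mem hvaU]
        simp only [List.length_cons] at hcard; omega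
      rw [ih B hlenAB hcard' hrest]

lemma decode_acyclic {v₀ : V} : ∀ (L : List V) {U : Finset V},
    L.length + 2 ≤ U.card →
    (fromEdgeSet ((decode v₀ U L : Finset (Sym2 V)) : Set (Sym2 V))).IsAcyclic := by
  intro L
  induction L with
  | nil =>
    intro U hcard
    rw [decode]
    have : (({s(pick v₀ U, pick v₀ (U.erase (pick v₀ U)))} : Finset (Sym2 V)) : Set (Sym2 V))
        = insert s(pick v₀ U, pick v₀ (U.erase (pick v₀ U))) (∅ : Set (Sym2 V)) := by
      simp
    rw [this]
    exact pendant_acyclic ∅ (by rw [fromEdgeSet_empty]; exact isAcyclic_bot) _ _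
      (fun e he => absurd he (Set.notMem_empty e))
  | cons a L ih =>
    intro U hcard
    have hne : (U \ (a :: L).toFinset).Nonempty :=
      sdiff_list_nonempty (by simp only [List.length_cons] at hcard ⊢; omega)
    set v := pick v₀ (U \ (a :: L).toFinset) with hv
    have hvmem := Finset.mem_sdiff.mp (pick_mem (v₀:=v₀) hne)
    have hcard' : L.length + 2 ≤ (U.erase v).card := by
      rw [Finset.card_erase_of_mem hvmem.1]
      simp only [List.length_cons] at hcard; omega
    rw [decode, ← hv, Finset.coe_insert]
    exact pendant_acyclic _ (ih hcard') v a
      (fun e he => decode_head_not_in_rest (v₀:=v₀) hcard e (by exact_mod_cast he))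

end AuxiliaryDecode

/-- The set of labeled forests on `d` nodes with exactly `k` edges. -/
abbrev ForestsWith (d k : ℕ) := {G : SimpleGraph (Fin d) // G.IsAcyclic ∧ G.edgeSet.ncard = k}

noncomputable instance (d k : ℕ) : Fintype (ForestsWith d k) := Fintype.ofFinite _

noncomputable instance (d k : ℕ) : DecidableEq (ForestsWith d k) := Classical.decEq _

section CardBound

open SimpleGraph

lemma card_forests {d k : ℕ} (hd : 2 ≤ d) (hk1 : 1 ≤ k) (hk : k ≤ d - 1) :
    d ^ (k - 1) ≤ Fintype.card (ForestsWith d k) := by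
  have hd0 : 0 < d := by omega
  set v₀ : Fin d := ⟨0, hd0⟩ with hv₀
  have hcardinv : ∀ g : Fin (k - 1) → Fin d,
      (List.ofFn g).length + 2 ≤ (Finset.univ : Finset (Fin d)).card := by
    intro g
    rw [List.length_ofFn, Finset.card_univ, Fintype.card_fin]
    omega
  have hnodiag : ∀ g : Fin (k - 1) → Fin d,
      ((decode v₀ Finset.univ (List.ofFn g) : Finset (Sym2 (Fin d))) : Set (Sym2 (Fin d)))
        \ Sym2.diagSet
      = ((decode v₀ Finset.univ (List.ofFn g) : Finset (Sym2 (Fin d))) : Set (Sym2 (Fin d))) := by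
    intro g
    ext e
    simp only [Set.mem_diff, Sym2.mem_diagSet, Set.mem_setOf_eq, Finset.mem_coe, and_iff_left_iff_imp]
    exact fun he => decode_nodiag (List.ofFn g) (hcardinv g) e he
  set F : (Fin (k - 1) → Fin d) → ForestsWith d k := fun g =>
    ⟨fromEdgeSet ((decode v₀ Finset.univ (List.ofFn g) : Finset (Sym2 (Fin d))) :
        Set (Sym2 (Fin d))),
      decode_acyclic (List.ofFn g) (hcardinv g), by
        rw [edgeSet_fromEdgeSet, hnodiag g]
        rw [Set.ncard_coe_finset, decode_card (List.ofFn g) (hcardinv g), List.length_ofFn]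
        omega⟩ with hF
  have hinj : Function.Injective F := by
    intro g1 g2 hgg
    have hgraph : fromEdgeSet ((decode v₀ Finset.univ (List.ofFn g1) : Finset (Sym2 (Fin d))) :
        Set (Sym2 (Fin d)))
        = fromEdgeSet ((decode v₀ Finset.univ (List.ofFn g2) : Finset (Sym2 (Fin d))) :
        Set (Sym2 (Fin d))) := congrArg Subtype.val hgg
    have hsets := congrArg SimpleGraph.edgeSet hgraph
    rw [edgeSet_fromEdgeSet, edgeSet_fromEdgeSet, hnodiag g1, hnodiag g2] at hsets
    have hfin : decode v₀ Finset.univ (List.ofFn g1) = decode v₀ Finset.univ (List.ofFn g2) :=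
      Finset.coe_injective hsets
    have hlists := decode_inj (List.ofFn g1) (List.ofFn g2)
      (by rw [List.length_ofFn, List.length_ofFn]) (hcardinv g1) hfin
    exact List.ofFn_injective hlists
  calc d ^ (k - 1) = Fintype.card (Fin (k - 1) → Fin d) := by
        rw [Fintype.card_fun, Fintype.card_fin, Fintype.card_fin]
    _ ≤ Fintype.card (ForestsWith d k) := Fintype.card_le_of_injective F hinj

end CardBound

/-- Lower bound on sample complexity, case (a): if the true forest `T` is uniform on the
set of labeled forests with `d` nodes and `k` edges, samples take values in `X^d` with
`|X| = r`, and `n < ρ·(k-1)·log d / (d·log r)` with `ρ < 1`, then any estimator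
`f : (X^d)^n → T_k^d` has error probability exceeding `1 - exp((ρ-1)(k-1)·log d)`. -/
theorem sample_complexity_lower_bound_fixed_k
    (d k n r : ℕ) (hr : 2 ≤ r) (hd : 2 ≤ d) (hk1 : 1 ≤ k) (hk : k ≤ d - 1)
    (ρ : ℝ) (hρ0 : 0 < ρ) (hρ1 : ρ < 1)
    (hn : (n : ℝ) < ρ * (((k : ℝ) - 1) * Real.log d) / ((d : ℝ) * Real.log r))
    (p : ForestsWith d k → (Fin n → Fin d → Fin r) → ℝ)
    (hp : ∀ t x, 0 ≤ p t x)
    (hmarg : ∀ t, ∑ x : Fin n → Fin d → Fin r, p t x = 1 / Fintype.card (ForestsWith d k))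
    (f : (Fin n → Fin d → Fin r) → ForestsWith d k) :
    1 - Real.exp ((ρ - 1) * ((k : ℝ) - 1) * Real.log d) <
      ∑ t : ForestsWith d k, ∑ x : Fin n → Fin d → Fin r, if f x ≠ t then p t x else 0 := by

  classical
  set N := Fintype.card (ForestsWith d k) with hN
  have hNge : d ^ (k - 1) ≤ N := card_forests hd hk1 hk
  have hN0 : 0 < N := lt_of_lt_of_le (Nat.pow_pos (by omega)) hNge
  have hN0' : (0 : ℝ) < (N : ℝ) := by exact_mod_cast hN0
  set M := Fintype.card (Fin n → Fin d → Fin r) with hM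
  have hMval : M = r ^ (d * n) := by
    rw [hM, Fintype.card_fun, Fintype.card_fun, Fintype.card_fin, Fintype.card_fin,
      Fintype.card_fin, ← pow_mul]
  -- error + correct = 1
  set correct := ∑ t : ForestsWith d k, ∑ x : Fin n → Fin d → Fin r,
    if f x = t then p t x else 0 with hcorrect
  set err := ∑ t : ForestsWith d k, ∑ x : Fin n → Fin d → Fin r,
    if f x ≠ t then p t x else 0 with herr
  have hsum1 : err + correct = 1 := by
    rw [herr, hcorrect, ← Finset.sum_add_distrib]
    have : ∀ t : ForestsWith d k,
        ((∑ x : Fin n → Fin d → Fin r, if f x ≠ t then p t x else 0) +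
         (∑ x : Fin n → Fin d → Fin r, if f x = t then p t x else 0)) = 1 / (N : ℝ) := by
      intro t
      rw [← Finset.sum_add_distrib, ← hmarg t]
      congr 1
      ext x
      by_cases h : f x = t <;> simp [h]
    rw [Finset.sum_congr rfl (fun t _ => this t)]
    rw [Finset.sum_const, Finset.card_univ, ← hN, nsmul_eq_mul]
    field_simp
  -- correct ≤ M / N
  have hcorrect_le : correct ≤ (M : ℝ) / (N : ℝ) := by
    have hswap : correct = ∑ x : Fin n → Fin d → Fin r, p (f x) x := by
      rw [hcorrect, Finset.sum_comm]
      congr 1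
      ext x
      rw [Finset.sum_ite_eq]
      simp
    rw [hswap]
    have hbound : ∀ x : Fin n → Fin d → Fin r, p (f x) x ≤ 1 / (N : ℝ) := by
      intro x
      rw [← hmarg (f x)]
      exact Finset.single_le_sum (fun x' _ => hp (f x) x') (Finset.mem_univ x)
    calc ∑ x : Fin n → Fin d → Fin r, p (f x) x
        ≤ ∑ _x : Fin n → Fin d → Fin r, (1 / (N : ℝ)) :=
          Finset.sum_le_sum (fun x _ => hbound x)
      _ = (M : ℝ) / (N : ℝ) := by
          rw [Finset.sum_const, Finset.card_univ, ← hM, nsmul_eq_mul]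
          ring
  -- M / N < exp ((ρ-1)(k-1) log d)
  have hlogr : 0 < Real.log r := Real.log_pos (by exact_mod_cast hr)
  have hlogd : 0 < Real.log d := Real.log_pos (by exact_mod_cast hd)
  have hdpos : (0 : ℝ) < (d : ℝ) := by exact_mod_cast (by omega : 0 < d)
  have hexp : ((d : ℝ) * Real.log r) > 0 := mul_pos hdpos hlogr
  have hnmul : (n : ℝ) * ((d : ℝ) * Real.log r) < ρ * (((k : ℝ) - 1) * Real.log d) :=
    (lt_div_iff₀ hexp).mp hn
  have hrpos : (0 : ℝ) < (r : ℝ) := by exact_mod_cast (by omega : 0 < r)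
  have hMexp : (M : ℝ) = Real.exp (((d * n : ℕ) : ℝ) * Real.log r) := by
    rw [← Real.log_pow, Real.exp_log (by positivity), hMval]
    push_cast
    ring
  have hMlt : (M : ℝ) < Real.exp (ρ * (((k : ℝ) - 1) * Real.log d)) := by
    rw [hMexp]
    apply Real.exp_lt_exp.mpr
    push_cast
    calc (d : ℝ) * (n : ℝ) * Real.log r = (n : ℝ) * ((d : ℝ) * Real.log r) := by ring
      _ < ρ * (((k : ℝ) - 1) * Real.log d) := hnmul
  have hkcast : (((k - 1 : ℕ)) : ℝ) = (k : ℝ) - 1 := by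
    have := Nat.cast_sub hk1 (R := ℝ)
    simpa using this
  have hNexp : Real.exp (((k : ℝ) - 1) * Real.log d) ≤ (N : ℝ) := by
    have h1 : (d : ℝ) ^ (k - 1 : ℕ) = Real.exp (((k : ℝ) - 1) * Real.log d) := by
      rw [← hkcast, ← Real.log_pow, Real.exp_log (by positivity)]
    rw [← h1]
    calc (d : ℝ) ^ (k - 1 : ℕ) = ((d ^ (k - 1) : ℕ) : ℝ) := by push_cast; ring
      _ ≤ (N : ℝ) := by exact_mod_cast hNge
  have hexpB : (0 : ℝ) < Real.exp (((k : ℝ) - 1) * Real.log d) := Real.exp_pos _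
  have hMN : (M : ℝ) / (N : ℝ) < Real.exp ((ρ - 1) * ((k : ℝ) - 1) * Real.log d) := by
    calc (M : ℝ) / (N : ℝ)
        ≤ (M : ℝ) / Real.exp (((k : ℝ) - 1) * Real.log d) := by
          apply div_le_div_of_nonneg_left (by positivity) hexpB hNexp
      _ < Real.exp (ρ * (((k : ℝ) - 1) * Real.log d)) /
            Real.exp (((k : ℝ) - 1) * Real.log d) := by
          gcongr
      _ = Real.exp ((ρ - 1) * ((k : ℝ) - 1) * Real.log d) := by
          rw [← Real.exp_sub]
          congr 1
          ring
  linarith [hcorrect_le, hsum1, hMN]
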